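/- Let P ⊆ ℝ^d be finite, Y ⊆ ℝ^d a bounded convex set, and for φ : P → ℝ and p ∈ P define MA_Y[φ](p) := Leb(Lag_P^φ(p) ∩ Y), the Lebesgue measure of the Laguerre cell intersected with Y. Then for each fixed p, the map φ ↦ -log MA_Y[φ](p) is convex on the set of φ with MA_Y[φ](p) > 0; equivalently, for φ_t = (1-t)φ₀ + tφ₁, one has MA_Y[φ_t](p) ≥ MA_Y[φ₀](p)^{1-t} · MA_Y[φ₁](p)^t. -/

import Mathlib

open scoped RealInnerProductSpace Pointwise
open MeasureTheory

open scoped ENNReal NNReal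
open Set

/-- Weighted AM–GM for two `ℝ≥0∞` numbers. -/
lemma geom2 {t : ℝ} (h0 : 0 < t) (h1 : t < 1) (a b : ℝ≥0∞) :
    a ^ (1 - t) * b ^ t ≤ ENNReal.ofReal (1 - t) * a + ENNReal.ofReal t * b := by
  have h1t : (0:ℝ) < 1 - t := by linarith
  rcases eq_or_ne a ⊤ with ha | ha
  · have : ENNReal.ofReal (1 - t) * a = ⊤ := by
      rw [ha]; exact ENNReal.mul_top (by simp [ENNReal.ofReal_eq_zero]; linarith)
    simp [this]
  rcases eq_or_ne b ⊤ with hb | hb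
  · have : ENNReal.ofReal t * b = ⊤ := by
      rw [hb]; exact ENNReal.mul_top (by simp [ENNReal.ofReal_eq_zero]; linarith)
    simp [this]
  lift a to ℝ≥0 using ha
  lift b to ℝ≥0 using hb
  have key := NNReal.geom_mean_le_arith_mean2_weighted (w₁ := (1 - t).toNNReal)
    (w₂ := t.toNNReal) (p₁ := a) (p₂ := b) ?_
  · have e1 : ((1 - t).toNNReal : ℝ) = 1 - t := Real.coe_toNNReal _ h1t.le
    have e2 : ((t).toNNReal : ℝ) = t := Real.coe_toNNReal _ h0.le
    rw [e1, e2] at key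
    calc (a : ℝ≥0∞) ^ (1 - t) * (b : ℝ≥0∞) ^ t
        = ((a ^ (1 - t) * b ^ t : ℝ≥0) : ℝ≥0∞) := by
          push_cast [ENNReal.coe_rpow_of_nonneg _ h1t.le, ENNReal.coe_rpow_of_nonneg _ h0.le]
          rfl
      _ ≤ (((1 - t).toNNReal * a + t.toNNReal * b : ℝ≥0) : ℝ≥0∞) := by exact_mod_cast key
      _ = ENNReal.ofReal (1 - t) * a + ENNReal.ofReal t * b := by
          push_cast [ENNReal.ofReal]; rfl
  · rw [← Real.toNNReal_add h1t.le h0.le]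
    norm_num

/-- One-dimensional additive lower bound for the measure of a sumset. -/
lemma sum1d {S T : Set ℝ} (hS : S.Nonempty) (hT : T.Nonempty)
    (hSm : MeasurableSet S) (hTm : MeasurableSet T) {E : Set ℝ}
    (hsub : ∀ x ∈ S, ∀ y ∈ T, x + y ∈ E) :
    volume S + volume T ≤ volume E := by
  classical
  -- translate: superset via translate when one measure infinite
  obtain ⟨x₀, hx₀⟩ := hS
  obtain ⟨y₀, hy₀⟩ := hT
  have htrans : ∀ (A : Set ℝ) (c : ℝ), volume ((fun z => z + c) ⁻¹' A) = volume A :=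
    fun A c => measure_preimage_add_right volume c A
  rcases eq_or_ne (volume S) ⊤ with hSi | hSfin
  · have hsub' : (fun z => z + (-y₀)) ⁻¹' S ⊆ E := by
      intro z hz
      have := hsub _ hz _ hy₀
      simpa using this
    have := measure_mono (μ := volume) hsub'
    rw [htrans S (-y₀), hSi] at this
    simp [top_le_iff.mp this]
  rcases eq_or_ne (volume T) ⊤ with hTi | hTfin
  · have hsub' : (fun z => z + (-x₀)) ⁻¹' T ⊆ E := by
      intro z hz
      have := hsub _ hx₀ _ hz
      have : (z + -x₀) + x₀ ∈ E := by
        have := hsub _ hx₀ _ hz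
        simpa [add_comm] using hsub _ hx₀ _ hz
      simpa using this
    have := measure_mono (μ := volume) hsub'
    rw [htrans T (-x₀), hTi] at this
    simp [top_le_iff.mp this]
  -- main case : approximate by compacts
  rcases eq_or_ne (volume E) ⊤ with hE | hE
  · simp [hE]
  apply ENNReal.le_of_forall_pos_le_add
  intro ε hε _
  have hε2 : ((ε : ℝ≥0∞) / 2) ≠ 0 := by
    simp [ENNReal.div_eq_zero_iff, hε.ne']
  obtain ⟨K₀, hK₀S, hK₀c, hK₀⟩ := hSm.exists_isCompact_lt_add hSfin hε2
  obtain ⟨L₀, hL₀T, hL₀c, hL₀⟩ := hTm.exists_isCompact_lt_add hTfin hε2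
  set K : Set ℝ := K₀ ∪ {x₀} with hK
  set L : Set ℝ := L₀ ∪ {y₀} with hL
  have hKc : IsCompact K := hK₀c.union isCompact_singleton
  have hLc : IsCompact L := hL₀c.union isCompact_singleton
  have hKS : K ⊆ S := union_subset hK₀S (by simpa using hx₀)
  have hLT : L ⊆ T := union_subset hL₀T (by simpa using hy₀)
  have hKne : K.Nonempty := ⟨x₀, by simp [hK]⟩
  have hLne : L.Nonempty := ⟨y₀, by simp [hL]⟩
  have hKm : volume S < volume K + ε / 2 :=
    lt_of_lt_of_le hK₀ (add_le_add_left (measure_mono subset_union_left) _)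
  have hLm : volume T < volume L + ε / 2 :=
    lt_of_lt_of_le hL₀ (add_le_add_left (measure_mono subset_union_left) _)
  -- compact case
  set k : ℝ := sSup K with hk
  set l : ℝ := sInf L with hl
  have hkK : k ∈ K := hKc.sSup_mem hKne
  have hlL : l ∈ L := hLc.sInf_mem hLne
  set A₁ : Set ℝ := (fun z => z + (-l)) ⁻¹' K with hA₁
  set A₂ : Set ℝ := (fun z => z + (-k)) ⁻¹' L with hA₂
  have hA₁m : MeasurableSet A₁ := (hKc.measurableSet).preimage (measurable_id.add_const _)
  have hA₂m : MeasurableSet A₂ := (hLc.measurableSet).preimage (measurable_id.add_const _)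
  have hA₁E : A₁ ⊆ E := by
    intro z hz
    have hzK : z - l ∈ K := by simpa [hA₁, sub_eq_add_neg] using hz
    have := hsub _ (hKS hzK) _ (hLT hlL)
    simpa using this
  have hA₂E : A₂ ⊆ E := by
    intro z hz
    have hzL : z - k ∈ L := by simpa [hA₂, sub_eq_add_neg] using hz
    have := hsub _ (hKS hkK) _ (hLT hzL)
    simpa [add_comm, add_sub_cancel] using this
  have hA₁le : ∀ z ∈ A₁, z ≤ k + l := by
    intro z hz
    have hzK : z - l ∈ K := by simpa [hA₁, sub_eq_add_neg] using hz
    have : z - l ≤ k := le_csSup hKc.bddAbove hzK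
    linarith
  have hA₂ge : ∀ z ∈ A₂, k + l ≤ z := by
    intro z hz
    have hzL : z - k ∈ L := by simpa [hA₂, sub_eq_add_neg] using hz
    have : l ≤ z - k := csInf_le hLc.bddBelow hzL
    linarith
  have hdisj : Disjoint (A₁ \ {k + l}) A₂ := by
    rw [Set.disjoint_left]
    rintro z ⟨hz1, hz2⟩ hz3
    exact hz2 (le_antisymm (hA₁le z hz1) (hA₂ge z hz3))
  have hunion : (A₁ \ {k + l}) ∪ A₂ ⊆ E :=
    union_subset (fun z hz => hA₁E hz.1) hA₂E
  have hvol : volume A₁ + volume A₂ ≤ volume E := by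
    have h1 : volume (A₁ \ {k + l}) = volume A₁ :=
      measure_diff_null (measure_singleton _)
    calc volume A₁ + volume A₂ = volume (A₁ \ {k + l}) + volume A₂ := by rw [h1]
      _ = volume ((A₁ \ {k + l}) ∪ A₂) := (measure_union hdisj hA₂m).symm
      _ ≤ volume E := measure_mono hunion
  have hvA₁ : volume A₁ = volume K := htrans K (-l)
  have hvA₂ : volume A₂ = volume L := htrans L (-k)
  calc volume S + volume T ≤ (volume K + ε / 2) + (volume L + ε / 2) :=
        add_le_add hKm.le hLm.le
    _ = (volume K + volume L) + (ε / 2 + ε / 2) := by ring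
    _ = (volume A₁ + volume A₂) + ε := by
        rw [hvA₁, hvA₂, ENNReal.add_halves]
    _ ≤ volume E + ε := add_le_add_left hvol _

/-- Layer-cake for finite-valued `ℝ≥0∞` functions. -/
lemma layercake' {α : Type*} [MeasurableSpace α] (μ : Measure α) {f : α → ℝ≥0∞}
    (hf : Measurable f) (hfin : ∀ x, f x ≠ ⊤) :
    ∫⁻ x, f x ∂μ = ∫⁻ s in Ioi (0:ℝ), μ {x | ENNReal.ofReal s < f x} := by
  have key := lintegral_eq_lintegral_meas_lt μ (f := fun x => (f x).toReal)
    (ae_of_all _ fun x => ENNReal.toReal_nonneg) (hf.ennreal_toReal.aemeasurable)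
  have h1 : ∫⁻ x, ENNReal.ofReal ((f x).toReal) ∂μ = ∫⁻ x, f x ∂μ :=
    lintegral_congr fun x => ENNReal.ofReal_toReal (hfin x)
  rw [h1] at key
  rw [key]
  refine setLIntegral_congr_fun measurableSet_Ioi (fun s hs => ?_)
  congr 1
  ext x
  simp only [mem_setOf_eq]
  rw [ENNReal.ofReal_lt_iff_lt_toReal (le_of_lt hs) (hfin x)]

/-- Scaling substitution for a lintegral over `Ioo 0 c`. -/
lemma substIoo {c : ℝ} (hc : 0 < c) (k : ℝ → ℝ≥0∞) (hk : Measurable k) :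
    ∫⁻ s in Ioo (0:ℝ) c, k s = ENNReal.ofReal c * ∫⁻ r in Ioo (0:ℝ) 1, k (c * r) := by
  have hc' : c ≠ 0 := hc.ne'
  have hmap := Real.smul_map_volume_mul_left hc'
  have hpre : (fun x => c * x) ⁻¹' Ioo (0:ℝ) c = Ioo 0 1 := by
    ext x
    simp only [mem_preimage, mem_Ioo]
    constructor
    · rintro ⟨h1, h2⟩
      have hx : 0 < x := by nlinarith
      exact ⟨hx, by nlinarith⟩
    · rintro ⟨h1, h2⟩
      exact ⟨by nlinarith, by nlinarith⟩
  calc ∫⁻ s in Ioo (0:ℝ) c, k s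
      = ∫⁻ s, k s ∂((ENNReal.ofReal |c| • Measure.map (fun x => c * x) volume).restrict (Ioo 0 c)) := by
        rw [hmap]
    _ = ENNReal.ofReal |c| * ∫⁻ s, k s ∂((Measure.map (fun x => c * x) volume).restrict (Ioo 0 c)) := by
        rw [Measure.restrict_smul, lintegral_smul_measure, smul_eq_mul]
    _ = ENNReal.ofReal |c| * ∫⁻ s, k s ∂(Measure.map (fun x => c * x) (volume.restrict (Ioo 0 1))) := by
        rw [Measure.restrict_map (measurable_const_mul c) measurableSet_Ioo, hpre]
    _ = ENNReal.ofReal c * ∫⁻ r in Ioo (0:ℝ) 1, k (c * r) := by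
        rw [lintegral_map hk (measurable_const_mul c), abs_of_pos hc]

/-- Drop an identically-zero tail. -/
lemma tailzero {c : ℝ} (hc : 0 < c) {k : ℝ → ℝ≥0∞} (h0 : ∀ s, c ≤ s → k s = 0) :
    ∫⁻ s in Ioi (0:ℝ), k s = ∫⁻ s in Ioo (0:ℝ) c, k s := by
  rw [← Ioo_union_Ici_eq_Ioi hc,
    lintegral_union measurableSet_Ici (Set.disjoint_left.mpr fun x hx hx' => absurd hx.2 (not_lt.mpr hx'))]
  have : ∫⁻ s in Ici c, k s = ∫⁻ s in Ici c, (0:ℝ≥0∞) :=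
    setLIntegral_congr_fun measurableSet_Ici (fun s hs => h0 s hs)
  simp [this]

/-- 1-D Prékopa–Leindler, bounded case. -/
lemma PL1core {t : ℝ} (ht0 : 0 < t) (ht1 : t < 1) {f g h : ℝ → ℝ≥0∞}
    (hf : Measurable f) (hg : Measurable g) (hh : Measurable h)
    (hSf : (⨆ x, f x) ≠ ⊤) (hSg : (⨆ x, g x) ≠ ⊤)
    (hyp : ∀ x y, f x ^ (1 - t) * g y ^ t ≤ h ((1 - t) * x + t * y)) :
    (∫⁻ x, f x) ^ (1 - t) * (∫⁻ x, g x) ^ t ≤ ∫⁻ x, h x := by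
  have h1t : (0:ℝ) < 1 - t := by linarith
  set If := ∫⁻ x, f x with hIf_def
  set Ig := ∫⁻ x, g x with hIg_def
  rcases eq_or_ne If 0 with hIf | hIf
  · rw [hIf, ENNReal.zero_rpow_of_pos h1t, zero_mul]; exact zero_le
  rcases eq_or_ne Ig 0 with hIg | hIg
  · rw [hIg, ENNReal.zero_rpow_of_pos ht0, mul_zero]; exact zero_le
  set Sf := ⨆ x, f x with hSf_def
  set Sg := ⨆ x, g x with hSg_def
  have hSf0 : Sf ≠ 0 := by
    intro h0
    apply hIf
    have : ∀ x, f x = 0 := fun x => le_antisymm (h0 ▸ le_iSup f x) zero_le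
    simp [hIf_def, this]
  have hSg0 : Sg ≠ 0 := by
    intro h0
    apply hIg
    have : ∀ x, g x = 0 := fun x => le_antisymm (h0 ▸ le_iSup g x) zero_le
    simp [hIg_def, this]
  have hffin : ∀ x, f x ≠ ⊤ := fun x => ne_top_of_le_ne_top hSf (le_iSup f x)
  have hgfin : ∀ x, g x ≠ ⊤ := fun x => ne_top_of_le_ne_top hSg (le_iSup g x)
  set SfR := Sf.toReal with hSfR_def
  set SgR := Sg.toReal with hSgR_def
  have hSfR : 0 < SfR := ENNReal.toReal_pos hSf0 hSf
  have hSgR : 0 < SgR := ENNReal.toReal_pos hSg0 hSg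
  have hSfRe : ENNReal.ofReal SfR = Sf := ENNReal.ofReal_toReal hSf
  have hSgRe : ENNReal.ofReal SgR = Sg := ENNReal.ofReal_toReal hSg
  set C := Sf ^ (1 - t) * Sg ^ t with hC_def
  have hC0 : C ≠ 0 := by
    exact mul_ne_zero
      (ENNReal.rpow_pos (pos_iff_ne_zero.mpr hSf0) hSf).ne'
      (ENNReal.rpow_pos (pos_iff_ne_zero.mpr hSg0) hSg).ne'
  have hCtop : C ≠ ⊤ := ENNReal.mul_ne_top
    (ENNReal.rpow_lt_top_of_nonneg h1t.le hSf).ne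
    (ENNReal.rpow_lt_top_of_nonneg ht0.le hSg).ne
  set CR := C.toReal with hCR_def
  have hCR : 0 < CR := ENNReal.toReal_pos hC0 hCtop
  have hCRe : ENNReal.ofReal CR = C := ENNReal.ofReal_toReal hCtop
  -- the level-set measure functions
  set kf : ℝ → ℝ≥0∞ := fun s => volume {a | ENNReal.ofReal s < f a} with hkf_def
  set kg : ℝ → ℝ≥0∞ := fun s => volume {a | ENNReal.ofReal s < g a} with hkg_def
  set kh : ℝ → ℝ≥0∞ := fun s => volume {a | ENNReal.ofReal s < h a} with hkh_def
  have kanti : ∀ (F : ℝ → ℝ≥0∞), Antitone (fun s => volume {a | ENNReal.ofReal s < F a}) :=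
    fun F r r' hr => measure_mono fun a ha =>
      lt_of_le_of_lt (ENNReal.ofReal_le_ofReal hr) ha
  have hkf : Measurable kf := (kanti f).measurable
  have hkg : Measurable kg := (kanti g).measurable
  have hkh : Measurable kh := (kanti h).measurable
  set Jf := ∫⁻ r in Ioo (0:ℝ) 1, kf (SfR * r) with hJf_def
  set Jg := ∫⁻ r in Ioo (0:ℝ) 1, kg (SgR * r) with hJg_def
  -- If = Sf * Jf
  have hIfJ : If = Sf * Jf := by
    rw [hIf_def, layercake' volume hf hffin]
    rw [tailzero hSfR (k := kf) (fun s hs => by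
      have hempty : {a | ENNReal.ofReal s < f a} = ∅ := by
        apply eq_empty_iff_forall_notMem.mpr
        intro a ha
        exact absurd (lt_of_lt_of_le ha ((le_iSup f a).trans
          (by show Sf ≤ ENNReal.ofReal s
              rw [← hSfRe]; exact ENNReal.ofReal_le_ofReal hs))) (lt_irrefl _)
      simp [hkf_def, hempty])]
    rw [substIoo hSfR kf hkf, hSfRe]
  have hIgJ : Ig = Sg * Jg := by
    rw [hIg_def, layercake' volume hg hgfin]
    rw [tailzero hSgR (k := kg) (fun s hs => by
      have hempty : {a | ENNReal.ofReal s < g a} = ∅ := by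
        apply eq_empty_iff_forall_notMem.mpr
        intro a ha
        exact absurd (lt_of_lt_of_le ha ((le_iSup g a).trans
          (by show Sg ≤ ENNReal.ofReal s
              rw [← hSgRe]; exact ENNReal.ofReal_le_ofReal hs))) (lt_irrefl _)
      simp [hkg_def, hempty])]
    rw [substIoo hSgR kg hkg, hSgRe]
  have hJf0 : Jf ≠ 0 := fun h0 => hIf (by rw [hIfJ, h0, mul_zero])
  have hJg0 : Jg ≠ 0 := fun h0 => hIg (by rw [hIgJ, h0, mul_zero])
  -- key level-set inequality
  have key : ∀ r ∈ Ioo (0:ℝ) 1,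
      ENNReal.ofReal (1 - t) * kf (SfR * r) + ENNReal.ofReal t * kg (SgR * r)
        ≤ kh (CR * r) := by
    rintro r ⟨hr0, hr1⟩
    set S := {a | ENNReal.ofReal (SfR * r) < f a} with hS_def
    set T := {a | ENNReal.ofReal (SgR * r) < g a} with hT_def
    have hre : (ENNReal.ofReal r) ≠ 0 := by simp [ENNReal.ofReal_eq_zero]; linarith
    have hrtop : (ENNReal.ofReal r) ≠ ⊤ := ENNReal.ofReal_ne_top
    have hofS : ENNReal.ofReal (SfR * r) = Sf * ENNReal.ofReal r := by
      rw [ENNReal.ofReal_mul hSfR.le, hSfRe]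
    have hofT : ENNReal.ofReal (SgR * r) = Sg * ENNReal.ofReal r := by
      rw [ENNReal.ofReal_mul hSgR.le, hSgRe]
    have hofC : ENNReal.ofReal (CR * r) = C * ENNReal.ofReal r := by
      rw [ENNReal.ofReal_mul hCR.le, hCRe]
    have hSne : S.Nonempty := by
      have hlt : Sf * ENNReal.ofReal r < Sf := by
        nth_rewrite 2 [← mul_one Sf]
        exact (ENNReal.mul_lt_mul_iff_right hSf0 hSf).mpr (ENNReal.ofReal_lt_one.mpr hr1)
      obtain ⟨x, hx⟩ := lt_iSup_iff.mp (hofS ▸ hlt.trans_le (le_of_eq hSf_def.symm) : ENNReal.ofReal (SfR * r) < ⨆ x, f x)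
      exact ⟨x, hx⟩
    have hTne : T.Nonempty := by
      have hlt : Sg * ENNReal.ofReal r < Sg := by
        nth_rewrite 2 [← mul_one Sg]
        exact (ENNReal.mul_lt_mul_iff_right hSg0 hSg).mpr (ENNReal.ofReal_lt_one.mpr hr1)
      obtain ⟨x, hx⟩ := lt_iSup_iff.mp (hofT ▸ hlt.trans_le (le_of_eq hSg_def.symm) : ENNReal.ofReal (SgR * r) < ⨆ x, g x)
      exact ⟨x, hx⟩
    have hSm : MeasurableSet S := hf measurableSet_Ioi
    have hTm : MeasurableSet T := hg measurableSet_Ioi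
    -- scaled sets
    have h1t0 : (1 - t) ≠ 0 := h1t.ne'
    have ht0' : t ≠ 0 := ht0.ne'
    have hS'm : MeasurableSet ((1 - t) • S) := by
      have : (1 - t) • S = (fun z : ℝ => (1 - t)⁻¹ • z) ⁻¹' S := by
        ext z; rw [mem_preimage, Set.mem_smul_set_iff_inv_smul_mem₀ h1t0]
      rw [this]
      exact hSm.preimage (measurable_const_smul _)
    have hT'm : MeasurableSet (t • T) := by
      have : t • T = (fun z : ℝ => t⁻¹ • z) ⁻¹' T := by
        ext z; rw [mem_preimage, Set.mem_smul_set_iff_inv_smul_mem₀ ht0']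
      rw [this]
      exact hTm.preimage (measurable_const_smul _)
    have hsub : ∀ x ∈ (1 - t) • S, ∀ y ∈ t • T, x + y ∈ {a | ENNReal.ofReal (CR * r) < h a} := by
      rintro _ ⟨x, hx, rfl⟩ _ ⟨y, hy, rfl⟩
      have hxf : ENNReal.ofReal (SfR * r) < f x := hx
      have hyg : ENNReal.ofReal (SgR * r) < g y := hy
      have hlt : ENNReal.ofReal (CR * r) < f x ^ (1 - t) * g y ^ t := by
        have e1 : ENNReal.ofReal (CR * r)
            = (Sf * ENNReal.ofReal r) ^ (1 - t) * (Sg * ENNReal.ofReal r) ^ t := by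
          rw [ENNReal.mul_rpow_of_ne_top hSf hrtop, ENNReal.mul_rpow_of_ne_top hSg hrtop,
            hofC, hC_def]
          rw [show Sf ^ (1 - t) * ENNReal.ofReal r ^ (1 - t) * (Sg ^ t * ENNReal.ofReal r ^ t)
              = Sf ^ (1 - t) * Sg ^ t * (ENNReal.ofReal r ^ (1 - t) * ENNReal.ofReal r ^ t) by ring]
          rw [← ENNReal.rpow_add _ _ hre hrtop]
          norm_num
        rw [e1]
        exact ENNReal.mul_lt_mul
          (ENNReal.rpow_lt_rpow (hofS ▸ hxf) h1t)
          (ENNReal.rpow_lt_rpow (hofT ▸ hyg) ht0)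
      exact mem_setOf_eq ▸ (hlt.trans_le (by simpa [smul_eq_mul] using hyp x y))
    have hsum := sum1d (hSne.smul_set) (hTne.smul_set) hS'm hT'm hsub
    have hvolS : volume ((1 - t) • S) = ENNReal.ofReal (1 - t) * volume S := by
      rw [Measure.addHaar_smul volume]
      simp [Module.finrank_self, abs_of_pos h1t]
    have hvolT : volume (t • T) = ENNReal.ofReal t * volume T := by
      rw [Measure.addHaar_smul volume]
      simp [Module.finrank_self, abs_of_pos ht0]
    rw [hvolS, hvolT] at hsum
    simpa [hkf_def, hkg_def, hkh_def, hS_def, hT_def] using hsum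
  -- assemble
  have hhmin : Measurable fun a => min (h a) C := hh.min measurable_const
  have hminfin : ∀ a, min (h a) C ≠ ⊤ := fun a => ne_top_of_le_ne_top hCtop (min_le_right _ _)
  have chain : C * (ENNReal.ofReal (1 - t) * Jf + ENNReal.ofReal t * Jg) ≤ ∫⁻ x, h x := by
    calc C * (ENNReal.ofReal (1 - t) * Jf + ENNReal.ofReal t * Jg)
        = C * ∫⁻ r in Ioo (0:ℝ) 1,
            (ENNReal.ofReal (1 - t) * kf (SfR * r) + ENNReal.ofReal t * kg (SgR * r)) := by
          rw [lintegral_add_left (f := fun r => ENNReal.ofReal (1 - t) * kf (SfR * r))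
              (((hkf.comp (measurable_const_mul SfR)).const_mul _ : Measurable fun r => ENNReal.ofReal (1 - t) * kf (SfR * r))) _,
            lintegral_const_mul' _ _ ENNReal.ofReal_ne_top,
            lintegral_const_mul' _ _ ENNReal.ofReal_ne_top]
      _ ≤ C * ∫⁻ r in Ioo (0:ℝ) 1, kh (CR * r) := by
          exact mul_le_mul_right
            (setLIntegral_mono (g := fun r => kh (CR * r))
              (hkh.comp (measurable_const_mul CR) :
                Measurable fun r => kh (CR * r)) key) C
      _ = ENNReal.ofReal CR * ∫⁻ r in Ioo (0:ℝ) 1, kh (CR * r) := by rw [hCRe]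
      _ = ∫⁻ s in Ioo (0:ℝ) CR, kh s := (substIoo hCR kh hkh).symm
      _ = ∫⁻ s in Ioo (0:ℝ) CR, volume {a | ENNReal.ofReal s < min (h a) C} := by
          refine setLIntegral_congr_fun measurableSet_Ioo (fun s hs => ?_)
          have hsC : ENNReal.ofReal s < C := by
            rw [← hCRe]
            exact (ENNReal.ofReal_lt_ofReal_iff hCR).mpr hs.2
          have hset : {a | ENNReal.ofReal s < h a} = {a | ENNReal.ofReal s < min (h a) C} := by
            ext a
            simp only [mem_setOf_eq, lt_min_iff]
            exact ⟨fun h' => ⟨h', hsC⟩, fun h' => h'.1⟩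
          show volume {a | ENNReal.ofReal s < h a} = _
          rw [hset]
      _ ≤ ∫⁻ s in Ioi (0:ℝ), volume {a | ENNReal.ofReal s < min (h a) C} :=
          lintegral_mono_set Ioo_subset_Ioi_self
      _ = ∫⁻ x, min (h x) C := (layercake' volume hhmin hminfin).symm
      _ ≤ ∫⁻ x, h x := lintegral_mono fun x => min_le_left _ _
  calc If ^ (1 - t) * Ig ^ t
      = (Sf ^ (1 - t) * Sg ^ t) * (Jf ^ (1 - t) * Jg ^ t) := by
        rw [hIfJ, hIgJ, ENNReal.mul_rpow_of_ne_zero hSf0 hJf0,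
          ENNReal.mul_rpow_of_ne_zero hSg0 hJg0]
        ring
    _ ≤ C * (ENNReal.ofReal (1 - t) * Jf + ENNReal.ofReal t * Jg) := by
        rw [← hC_def]
        exact mul_le_mul_right (geom2 ht0 ht1 Jf Jg) C
    _ ≤ ∫⁻ x, h x := chain

lemma rpow_iSup {ι : Sort*} [Nonempty ι] (f : ι → ℝ≥0∞) {e : ℝ} (he : 0 < e) :
    (⨆ i, f i) ^ e = ⨆ i, f i ^ e := by
  have := OrderIso.map_iSup (ENNReal.orderIsoRpow e he) f
  exact this

/-- The Prékopa–Leindler property of a measure space with real scalar action. -/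
def PLP (α : Type*) [MeasureSpace α] [AddCommMonoid α] [Module ℝ α] : Prop :=
  ∀ (t : ℝ), 0 < t → t < 1 → ∀ (f g h : α → ℝ≥0∞), Measurable f → Measurable g →
    Measurable h → (∀ x y, f x ^ (1 - t) * g y ^ t ≤ h ((1 - t) • x + t • y)) →
    (∫⁻ x, f x) ^ (1 - t) * (∫⁻ x, g x) ^ t ≤ ∫⁻ x, h x

lemma plp_R : PLP ℝ := by
  intro t ht0 ht1 f g h hf hg hh hyp
  have h1t : (0:ℝ) < 1 - t := by linarith
  set fM : ℕ → ℝ → ℝ≥0∞ := fun n x => min (f x) n with hfM_def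
  set gM : ℕ → ℝ → ℝ≥0∞ := fun n x => min (g x) n with hgM_def
  have hfMm : ∀ n, Measurable (fM n) := fun n => hf.min measurable_const
  have hgMm : ∀ n, Measurable (gM n) := fun n => hg.min measurable_const
  have key : ∀ n m : ℕ,
      (∫⁻ x, fM n x) ^ (1 - t) * (∫⁻ x, gM m x) ^ t ≤ ∫⁻ x, h x := by
    intro n m
    refine PL1core ht0 ht1 (hfMm n) (hgMm m) hh ?_ ?_ ?_
    · exact ne_top_of_le_ne_top (ENNReal.natCast_ne_top n)
        (iSup_le fun x => min_le_right _ _)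
    · exact ne_top_of_le_ne_top (ENNReal.natCast_ne_top m)
        (iSup_le fun x => min_le_right _ _)
    · intro x y
      refine le_trans ?_ (by simpa [smul_eq_mul] using hyp x y)
      exact mul_le_mul'
        (ENNReal.rpow_le_rpow (min_le_left _ _) h1t.le)
        (ENNReal.rpow_le_rpow (min_le_left _ _) ht0.le)
  have hfmono : Monotone fM := fun n m hnm x =>
    min_le_min (le_refl (f x)) (Nat.cast_le.mpr hnm)
  have hgmono : Monotone gM := fun n m hnm x =>
    min_le_min (le_refl (g x)) (Nat.cast_le.mpr hnm)
  have hIf : ∫⁻ x, f x = ⨆ n, ∫⁻ x, fM n x := by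
    rw [← lintegral_iSup hfMm hfmono]
    refine lintegral_congr fun x => ?_
    rw [← inf_iSup_eq]
    simp [ENNReal.iSup_natCast]
  have hIg : ∫⁻ x, g x = ⨆ n, ∫⁻ x, gM n x := by
    rw [← lintegral_iSup hgMm hgmono]
    refine lintegral_congr fun x => ?_
    rw [← inf_iSup_eq]
    simp [ENNReal.iSup_natCast]
  rw [hIf, hIg, rpow_iSup _ h1t, rpow_iSup _ ht0, ENNReal.iSup_mul]
  refine iSup_le fun n => ?_
  rw [ENNReal.mul_iSup]
  exact iSup_le fun m => key n m

lemma plp_prod {α : Type*} [MeasureSpace α] [SigmaFinite (volume : Measure α)]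
    [AddCommMonoid α] [Module ℝ α] (hα : PLP α) : PLP (ℝ × α) := by
  intro t ht0 ht1 f g h hf hg hh hyp
  set F : ℝ → ℝ≥0∞ := fun x => ∫⁻ y, f (x, y) with hF_def
  set G : ℝ → ℝ≥0∞ := fun x => ∫⁻ y, g (x, y) with hG_def
  set H : ℝ → ℝ≥0∞ := fun x => ∫⁻ y, h (x, y) with hH_def
  have hFm : Measurable F := hf.lintegral_prod_right'
  have hGm : Measurable G := hg.lintegral_prod_right'
  have hHm : Measurable H := hh.lintegral_prod_right'
  have inner : ∀ x₁ y₁ : ℝ, F x₁ ^ (1 - t) * G y₁ ^ t ≤ H ((1 - t) • x₁ + t • y₁) := by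
    intro x₁ y₁
    refine hα t ht0 ht1 (fun y => f (x₁, y)) (fun y => g (y₁, y))
      (fun y => h ((1 - t) • x₁ + t • y₁, y))
      (hf.comp measurable_prodMk_left) (hg.comp measurable_prodMk_left)
      (hh.comp measurable_prodMk_left) ?_
    intro y y'
    have := hyp (x₁, y) (y₁, y')
    simpa [Prod.smul_mk, Prod.mk_add_mk] using this
  have main := plp_R t ht0 ht1 F G H hFm hGm hHm inner
  have eq1 : ∫⁻ x, F x = ∫⁻ z, f z := by
    rw [hF_def, Measure.volume_eq_prod, lintegral_prod _ hf.aemeasurable]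
  have eq2 : ∫⁻ x, G x = ∫⁻ z, g z := by
    rw [hG_def, Measure.volume_eq_prod, lintegral_prod _ hg.aemeasurable]
  have eq3 : ∫⁻ x, H x = ∫⁻ z, h z := by
    rw [hH_def, Measure.volume_eq_prod, lintegral_prod _ hh.aemeasurable]
  rw [← eq1, ← eq2, ← eq3]
  exact main

lemma plp_transfer {α β : Type*} [MeasureSpace α] [MeasureSpace β]
    [AddCommMonoid α] [Module ℝ α] [AddCommMonoid β] [Module ℝ β]
    (e : α ≃ᵐ β) (he : MeasurePreserving e volume volume)
    (hlin : ∀ (c c' : ℝ) (x y : α), e (c • x + c' • y) = c • e x + c' • e y)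
    (hβ : PLP β) : PLP α := by
  intro t ht0 ht1 f g h hf hg hh hyp
  have hsymm : ∀ (c c' : ℝ) (x y : β),
      e.symm (c • x + c' • y) = c • e.symm x + c' • e.symm y := by
    intro c c' x y
    apply e.injective
    rw [e.apply_symm_apply, hlin, e.apply_symm_apply, e.apply_symm_apply]
  have hesymm := he.symm e
  have key := hβ t ht0 ht1 (f ∘ e.symm) (g ∘ e.symm) (h ∘ e.symm)
    (hf.comp e.symm.measurable) (hg.comp e.symm.measurable) (hh.comp e.symm.measurable) ?_
  · have e1 : ∫⁻ x, (f ∘ e.symm) x = ∫⁻ x, f x := hesymm.lintegral_comp hf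
    have e2 : ∫⁻ x, (g ∘ e.symm) x = ∫⁻ x, g x := hesymm.lintegral_comp hg
    have e3 : ∫⁻ x, (h ∘ e.symm) x = ∫⁻ x, h x := hesymm.lintegral_comp hh
    rw [e1, e2, e3] at key
    exact key
  · intro x y
    have := hyp (e.symm x) (e.symm y)
    simpa [Function.comp, hsymm] using this

lemma plp_pi : ∀ n : ℕ, PLP (Fin n → ℝ) := by
  intro n
  induction n with
  | zero =>
    intro t ht0 ht1 f g h hf hg hh hyp
    rw [lintegral_unique f, lintegral_unique g, lintegral_unique h]
    have huniv : (volume : Measure (Fin 0 → ℝ)) Set.univ = 1 := by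
      rw [volume_pi, Measure.pi_univ]
      simp
    rw [huniv, mul_one, mul_one, mul_one]
    have key := hyp default default
    have he : ((1 - t) • (default : Fin 0 → ℝ) + t • default) = default :=
      Subsingleton.elim _ _
    rw [he] at key
    have e1 : ∀ (F : (Fin 0 → ℝ) → ℝ≥0∞) (x y : Fin 0 → ℝ), F x = F y :=
      fun F x y => congrArg F (Subsingleton.elim x y)
    rw [e1 f _ default, e1 g _ default, e1 h _ default]
    exact key
  | succ n ih =>
    set e : (Fin (n+1) → ℝ) ≃ᵐ ℝ × (Fin n → ℝ) :=
      MeasurableEquiv.piFinSuccAbove (fun _ => ℝ) 0 with he_def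
    have hmp : MeasurePreserving e volume volume := by
      have h1 := measurePreserving_piFinSuccAbove (fun _ : Fin (n+1) => (volume : Measure ℝ)) 0
      have h2 : (Measure.pi fun _ : Fin (n+1) => (volume : Measure ℝ)) = volume := volume_pi.symm
      have h3 : ((volume : Measure ℝ).prod (Measure.pi fun _ : Fin n => (volume : Measure ℝ)))
          = volume := by
        rw [show (Measure.pi fun _ : Fin n => (volume : Measure ℝ)) = volume from volume_pi.symm]
        exact (Measure.volume_eq_prod ℝ (Fin n → ℝ)).symm
      rw [h2, h3] at h1
      exact h1
    have hlin : ∀ (c c' : ℝ) (x y : Fin (n+1) → ℝ),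
        e (c • x + c' • y) = c • e x + c' • e y := fun c c' x y => rfl
    exact plp_transfer e hmp hlin (plp_prod ih)

lemma plp_euclidean (d : ℕ) : PLP (EuclideanSpace ℝ (Fin d)) := by
  refine plp_transfer (MeasurableEquiv.toLp 2 (Fin d → ℝ)).symm
    (EuclideanSpace.volume_preserving_symm_measurableEquiv_toLp (Fin d)) ?_ (plp_pi d)
  intro c c' x y
  rfl

/-- The Laguerre cell of a point `p` for the function `φ` on the finite set `P`. -/
def Lag {d : ℕ} (P : Finset (EuclideanSpace ℝ (Fin d)))
    (φ : EuclideanSpace ℝ (Fin d) → ℝ) (p : EuclideanSpace ℝ (Fin d)) :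
    Set (EuclideanSpace ℝ (Fin d)) :=
  {y | ∀ q ∈ P, φ p + ⟪q - p, y⟫ ≤ φ q}

lemma Lag_convex {d : ℕ} (P : Finset (EuclideanSpace ℝ (Fin d)))
    (φ : EuclideanSpace ℝ (Fin d) → ℝ) (p : EuclideanSpace ℝ (Fin d)) :
    Convex ℝ (Lag P φ p) := by
  intro y₁ hy₁ y₂ hy₂ a b ha hb hab
  intro q hq
  have h1 := hy₁ q hq
  have h2 := hy₂ q hq
  have hin : ⟪q - p, a • y₁ + b • y₂⟫ = a * ⟪q - p, y₁⟫ + b * ⟪q - p, y₂⟫ := by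
    rw [inner_add_right, real_inner_smul_right, real_inner_smul_right]
  rw [hin]
  have h3 : a * φ p + b * φ p = φ p := by rw [← add_mul, hab, one_mul]
  have h4 : a * φ q + b * φ q = φ q := by rw [← add_mul, hab, one_mul]
  have h5 := mul_le_mul_of_nonneg_left h1 ha
  have h6 := mul_le_mul_of_nonneg_left h2 hb
  nlinarith [h3, h4, h5, h6]

lemma Lag_measurable {d : ℕ} (P : Finset (EuclideanSpace ℝ (Fin d)))
    (φ : EuclideanSpace ℝ (Fin d) → ℝ) (p : EuclideanSpace ℝ (Fin d)) :
    MeasurableSet (Lag P φ p) := by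
  have : Lag P φ p = ⋂ q ∈ P, {y | φ p + ⟪q - p, y⟫ ≤ φ q} := by
    ext y; simp [Lag, mem_iInter]
  rw [this]
  refine MeasurableSet.biInter P.countable_toSet fun q _ => ?_
  exact measurableSet_le
    ((continuous_const.add (continuous_const.inner continuous_id)).measurable)
    measurable_const

/-- Log-concavity of the discrete Monge–Ampère operator `φ ↦ Leb(Lag_P^φ(p) ∩ Y)`:
equivalently, the multiplicative Brunn–Minkowski-type inequality along linear
interpolations of `φ`. -/
theorem MA_log_concave {d : ℕ} (P : Finset (EuclideanSpace ℝ (Fin d)))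
    (Y : Set (EuclideanSpace ℝ (Fin d))) (hYb : Bornology.IsBounded Y) (hYc : Convex ℝ Y)
    (φ₀ φ₁ : EuclideanSpace ℝ (Fin d) → ℝ)
    {t : ℝ} (ht : t ∈ Set.Icc (0:ℝ) 1)
    {p : EuclideanSpace ℝ (Fin d)} (hp : p ∈ P) :
    volume (Lag P φ₀ p ∩ Y) ^ (1 - t) * volume (Lag P φ₁ p ∩ Y) ^ t ≤
      volume (Lag P (fun x => (1 - t) * φ₀ x + t * φ₁ x) p ∩ Y) := by
  obtain ⟨ht0, ht1⟩ := ht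
  rcases eq_or_lt_of_le ht0 with h0 | h0
  · subst h0
    have : (fun x => (1 - 0) * φ₀ x + 0 * φ₁ x) = φ₀ := by funext x; ring
    rw [this]
    simp
  rcases eq_or_lt_of_le ht1 with h1 | h1
  · subst h1
    have : (fun x => (1 - 1) * φ₀ x + 1 * φ₁ x) = φ₁ := by funext x; ring
    rw [this]
    simp
  -- main case : 0 < t < 1
  have h1t : (0:ℝ) < 1 - t := by linarith
  set A := Lag P φ₀ p ∩ Y with hA_def
  set B := Lag P φ₁ p ∩ Y with hB_def
  set Cs := Lag P (fun x => (1 - t) * φ₀ x + t * φ₁ x) p ∩ Y with hC_def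
  -- convexity and null measurability
  have hAnm : NullMeasurableSet A volume :=
    Convex.nullMeasurableSet volume ((Lag_convex P φ₀ p).inter hYc)
  have hBnm : NullMeasurableSet B volume :=
    Convex.nullMeasurableSet volume ((Lag_convex P φ₁ p).inter hYc)
  obtain ⟨A', hA'sub, hA'm, hA'ae⟩ := hAnm.exists_measurable_subset_ae_eq
  obtain ⟨B', hB'sub, hB'm, hB'ae⟩ := hBnm.exists_measurable_subset_ae_eq
  set C' := toMeasurable volume Cs with hC'_def
  have hC'm : MeasurableSet C' := measurableSet_toMeasurable _ _
  have hvolA : volume A' = volume A := measure_congr hA'ae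
  have hvolB : volume B' = volume B := measure_congr hB'ae
  have hvolC : volume C' = volume Cs := measure_toMeasurable _
  -- the combination inclusion
  have hincl : ∀ x ∈ A, ∀ y ∈ B, (1 - t) • x + t • y ∈ Cs := by
    rintro x ⟨hxL, hxY⟩ y ⟨hyL, hyY⟩
    constructor
    · intro q hq
      have h1 := hxL q hq
      have h2 := hyL q hq
      have hin : ⟪q - p, (1 - t) • x + t • y⟫
          = (1 - t) * ⟪q - p, x⟫ + t * ⟪q - p, y⟫ := by
        rw [inner_add_right, real_inner_smul_right, real_inner_smul_right]
      simp only
      rw [hin]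
      nlinarith [mul_le_mul_of_nonneg_left h1 h1t.le, mul_le_mul_of_nonneg_left h2 h0.le]
    · exact hYc hxY hyY h1t.le h0.le (by ring)
  -- apply Prékopa–Leindler to indicators
  have key := plp_euclidean d t h0 h1 (A'.indicator 1) (B'.indicator 1) (C'.indicator 1)
    ((measurable_const (a := (1:ℝ≥0∞))).indicator hA'm)
    ((measurable_const (a := (1:ℝ≥0∞))).indicator hB'm)
    ((measurable_const (a := (1:ℝ≥0∞))).indicator hC'm) ?_
  · rw [lintegral_indicator_one hA'm, lintegral_indicator_one hB'm,
      lintegral_indicator_one hC'm, hvolA, hvolB, hvolC] at key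
    exact key
  · intro x y
    by_cases hx : x ∈ A'
    · by_cases hy : y ∈ B'
      · have hz : (1 - t) • x + t • y ∈ C' :=
          subset_toMeasurable _ _ (hincl x (hA'sub hx) y (hB'sub hy))
        rw [indicator_of_mem hx, indicator_of_mem hy, indicator_of_mem hz]
        simp
      · rw [indicator_of_notMem hy]
        rw [ENNReal.zero_rpow_of_pos h0, mul_zero]
        exact zero_le
    · rw [indicator_of_notMem hx]
      rw [ENNReal.zero_rpow_of_pos h1t, zero_mul]
      exact zero_le
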